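/- Let A be an n×n doubly nonnegative matrix of rank 3 with A = B^T B where B ∈ ℝ^{3×n}. If B is nonnegative-equivalent (nnq), i.e., B has a nonsingular 3×3 submatrix B_1 with B_1^{-1} B entrywise nonnegative, then A is completely positive with cp-rank(A) = 3. -/

import Mathlib

open Matrix BigOperators

def Matrix.IsCP {n : Type*} [Fintype n] (A : Matrix n n ℝ) : Prop :=
  ∃ (m : ℕ) (B : Matrix (Fin m) n ℝ), (∀ i j, 0 ≤ B i j) ∧ A = Bᵀ * B

noncomputable def Matrix.cpRank {n : Type*} [Fintype n] (A : Matrix n n ℝ) : ℕ :=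
  sInf {m | ∃ B : Matrix (Fin m) n ℝ, (∀ i j, 0 ≤ B i j) ∧ A = Bᵀ * B}

def Matrix.IsNNQ {r n : ℕ} (B : Matrix (Fin r) (Fin n) ℝ) : Prop :=
  ∃ s : Fin r → Fin n, IsUnit (B.submatrix id s).det ∧
    ∀ i j, 0 ≤ ((B.submatrix id s)⁻¹ * B) i j



set_option maxHeartbeats 1000000 in
lemma core3 (a b c : ℝ) (ha : 0 ≤ a) (hb : 0 ≤ b) (hc : 0 ≤ c)
    (ha1 : a < 1) (hb1 : b ≤ 1) (hc1 : c ≤ 1) (hab : a ≤ b) (hac : a ≤ c)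
    (hdet : 0 ≤ 1 + 2*a*b*c - a^2 - b^2 - c^2) :
    ∃ L : Matrix (Fin 3) (Fin 3) ℝ, (∀ i j, 0 ≤ L i j) ∧
      Lᵀ * L = !![1,a,b;a,1,c;b,c,1] := by
  have h1a2 : 0 < 1 - a^2 := by nlinarith
  obtain ⟨s, hs2, hspos⟩ : ∃ s : ℝ, s^2 = 1 - a^2 ∧ 0 < s :=
    ⟨Real.sqrt (1 - a^2), Real.sq_sqrt h1a2.le, Real.sqrt_pos.mpr h1a2⟩
  have hsle : s ≤ 1 := by nlinarith [sq_nonneg a]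
  obtain ⟨p, hp2, hp0⟩ : ∃ p : ℝ, p^2 = (1+s)/2 ∧ 0 ≤ p :=
    ⟨Real.sqrt ((1+s)/2), Real.sq_sqrt (by linarith), Real.sqrt_nonneg _⟩
  obtain ⟨q, hq2, hq0⟩ : ∃ q : ℝ, q^2 = (1-s)/2 ∧ 0 ≤ q :=
    ⟨Real.sqrt ((1-s)/2), Real.sq_sqrt (by linarith), Real.sqrt_nonneg _⟩
  have hpq : p * q = a / 2 := by
    have h1 : (p*q)^2 = (a/2)^2 := by
      rw [mul_pow, hp2, hq2]; linear_combination (-1/4)*hs2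
    have h2 : 0 ≤ p*q := mul_nonneg hp0 hq0
    nlinarith [h1, h2]
  set c1 : ℝ := (b*p - c*q)/s with hc1_def
  set c2 : ℝ := (c*p - b*q)/s with hc2_def
  have hb2 : a^2 ≤ b^2 := by nlinarith
  have hc2' : a^2 ≤ c^2 := by nlinarith
  have hcc1 : c^2 ≤ 1 := by nlinarith
  have hbb1 : b^2 ≤ 1 := by nlinarith
  have key1 : (c*q)^2 ≤ (b*p)^2 := by
    have h : c^2*(1-s) ≤ b^2*(1+s) := by nlinarith [hs2]
    calc (c*q)^2 = c^2 * ((1-s)/2) := by rw [mul_pow, hq2]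
      _ ≤ b^2 * ((1+s)/2) := by linarith
      _ = (b*p)^2 := by rw [mul_pow, hp2]
  have key2 : (b*q)^2 ≤ (c*p)^2 := by
    have h : b^2*(1-s) ≤ c^2*(1+s) := by nlinarith [hs2]
    calc (b*q)^2 = b^2 * ((1-s)/2) := by rw [mul_pow, hq2]
      _ ≤ c^2 * ((1+s)/2) := by linarith
      _ = (c*p)^2 := by rw [mul_pow, hp2]
  have hle1 : c*q ≤ b*p := by
    calc c*q = Real.sqrt ((c*q)^2) := (Real.sqrt_sq (mul_nonneg hc hq0)).symm
      _ ≤ Real.sqrt ((b*p)^2) := Real.sqrt_le_sqrt key1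
      _ = b*p := Real.sqrt_sq (mul_nonneg hb hp0)
  have hle2 : b*q ≤ c*p := by
    calc b*q = Real.sqrt ((b*q)^2) := (Real.sqrt_sq (mul_nonneg hb hq0)).symm
      _ ≤ Real.sqrt ((c*p)^2) := Real.sqrt_le_sqrt key2
      _ = c*p := Real.sqrt_sq (mul_nonneg hc hp0)
  have hc1nn : 0 ≤ c1 := div_nonneg (by linarith) hspos.le
  have hc2nn : 0 ≤ c2 := div_nonneg (by linarith) hspos.le
  have hc1s : c1 * s = b*p - c*q := by rw [hc1_def]; field_simp
  have hc2s : c2 * s = c*p - b*q := by rw [hc2_def]; field_simp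
  have e : (b*p - c*q)^2 + (c*p - b*q)^2 = b^2 + c^2 - 2*a*b*c := by
    linear_combination (b^2+c^2)*hp2 + (b^2+c^2)*hq2 - 4*b*c*hpq
  have hsum : (c1^2 + c2^2) * s^2 = b^2 + c^2 - 2*a*b*c := by
    linear_combination (c1*s + b*p - c*q)*hc1s + (c2*s + c*p - b*q)*hc2s + e
  have hsum1 : c1^2 + c2^2 ≤ 1 := by nlinarith [hs2, hsum, sq_nonneg s]
  obtain ⟨c3, hc32, hc3nn⟩ : ∃ c3 : ℝ, c3^2 = 1 - c1^2 - c2^2 ∧ 0 ≤ c3 :=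
    ⟨Real.sqrt (1 - c1^2 - c2^2), Real.sq_sqrt (by linarith), Real.sqrt_nonneg _⟩
  have hps : p^2 - q^2 = s := by rw [hp2, hq2]; ring
  have hbent : p*c1 + q*c2 = b := by
    have h : s*(p*c1 + q*c2) = s*b := by
      linear_combination p*hc1s + q*hc2s + b*hps
    exact mul_left_cancel₀ hspos.ne' h
  have hcent : q*c1 + p*c2 = c := by
    have h : s*(q*c1 + p*c2) = s*c := by
      linear_combination q*hc1s + p*hc2s + c*hps
    exact mul_left_cancel₀ hspos.ne' h
  refine ⟨!![p, q, c1; q, p, c2; 0, 0, c3], ?_, ?_⟩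
  · intro i j
    fin_cases i <;> fin_cases j <;>
      simp [hp0, hq0, hc1nn, hc2nn, hc3nn]
  · have hT : (!![p, q, c1; q, p, c2; 0, 0, c3] : Matrix (Fin 3) (Fin 3) ℝ)ᵀ
        = !![p, q, 0; q, p, 0; c1, c2, c3] := by
      ext i j; fin_cases i <;> fin_cases j <;> rfl
    rw [hT, Matrix.mul_fin_three]
    ext i j
    fin_cases i <;> fin_cases j <;> simp
    · linear_combination hp2 + hq2
    · linear_combination 2*hpq
    · linear_combination hbent
    · linear_combination 2*hpq
    · linear_combination hp2 + hq2
    · linear_combination hcent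
    · linear_combination hbent
    · linear_combination hcent
    · linear_combination hc32



lemma sub_gram (L : Matrix (Fin 3) (Fin 3) ℝ) (σ : Fin 3 → Fin 3) :
    (L.submatrix id σ)ᵀ * (L.submatrix id σ) = (Lᵀ * L).submatrix σ σ := by
  ext i j
  simp [Matrix.mul_apply, Matrix.submatrix_apply]

lemma corr3 (a b c : ℝ) (ha : 0 ≤ a) (hb : 0 ≤ b) (hc : 0 ≤ c)
    (ha1 : a < 1) (hb1 : b < 1) (hc1 : c < 1)
    (hdet : 0 ≤ 1 + 2*a*b*c - a^2 - b^2 - c^2) :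
    ∃ L : Matrix (Fin 3) (Fin 3) ℝ, (∀ i j, 0 ≤ L i j) ∧
      Lᵀ * L = !![1,a,b;a,1,c;b,c,1] := by
  rcases le_total a b with h1 | h1
  · rcases le_total a c with h2 | h2
    · exact core3 a b c ha hb hc ha1 hb1.le hc1.le h1 h2 hdet
    · -- c is min : use core3 c b a, σ = ![2,1,0]
      obtain ⟨L, hLnn, hL⟩ := core3 c b a hc hb ha hc1 hb1.le ha1.le (h2.trans h1) h2
        (by nlinarith [hdet])
      refine ⟨L.submatrix id ![2,1,0], fun i j => hLnn _ _, ?_⟩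
      rw [sub_gram, hL]
      ext i j
      fin_cases i <;> fin_cases j <;> simp
  · rcases le_total b c with h2 | h2
    · -- b min : core3 b a c, σ = ![0,2,1]
      obtain ⟨L, hLnn, hL⟩ := core3 b a c hb ha hc hb1 ha1.le hc1.le h1 h2
        (by nlinarith [hdet])
      refine ⟨L.submatrix id ![0,2,1], fun i j => hLnn _ _, ?_⟩
      rw [sub_gram, hL]
      ext i j
      fin_cases i <;> fin_cases j <;> simp
    · -- c min
      obtain ⟨L, hLnn, hL⟩ := core3 c b a hc hb ha hc1 hb1.le ha1.le h2 (h2.trans h1)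
        (by nlinarith [hdet])
      refine ⟨L.submatrix id ![2,1,0], fun i j => hLnn _ _, ?_⟩
      rw [sub_gram, hL]
      ext i j
      fin_cases i <;> fin_cases j <;> simp



set_option maxHeartbeats 1000000 in
lemma factor3 (M : Matrix (Fin 3) (Fin 3) ℝ) (hpd : M.PosDef)
    (hnn : ∀ i j, 0 ≤ M i j) :
    ∃ L : Matrix (Fin 3) (Fin 3) ℝ, (∀ i j, 0 ≤ L i j) ∧ Lᵀ * L = M := by
  have hsym : ∀ i j, M j i = M i j := by
    intro i j
    have h := congr_fun (congr_fun hpd.1 j) i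
    simp [Matrix.conjTranspose_apply] at h
    exact h.symm
  have hdiag : ∀ i, 0 < M i i := by
    intro i
    have h := hpd.dotProduct_mulVec_pos (x := Pi.single i 1) (by
      intro hcon
      have := congr_fun hcon i
      simp [Pi.single_eq_same] at this)
    simpa [dotProduct, Matrix.mulVec, Pi.single_apply, Finset.sum_ite_eq] using h
  have key01 : (M 0 1)^2 < M 0 0 * M 1 1 := by
    have hv : (![M 0 1, -(M 0 0), 0] : Fin 3 → ℝ) ≠ 0 := by
      intro h
      have := congr_fun h 1
      simp at this
      exact (hdiag 0).ne' this
    have h := hpd.dotProduct_mulVec_pos hv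
    simp [dotProduct, Matrix.mulVec, Fin.sum_univ_three] at h
    rw [hsym 0 1] at h
    nlinarith [hdiag 0, h]
  have key02 : (M 0 2)^2 < M 0 0 * M 2 2 := by
    have hv : (![M 0 2, 0, -(M 0 0)] : Fin 3 → ℝ) ≠ 0 := by
      intro h
      have := congr_fun h 2
      simp at this
      exact (hdiag 0).ne' this
    have h := hpd.dotProduct_mulVec_pos hv
    simp [dotProduct, Matrix.mulVec, Fin.sum_univ_three] at h
    rw [hsym 0 2] at h
    nlinarith [hdiag 0, h]
  have key12 : (M 1 2)^2 < M 1 1 * M 2 2 := by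
    have hv : (![0, M 1 2, -(M 1 1)] : Fin 3 → ℝ) ≠ 0 := by
      intro h
      have := congr_fun h 2
      simp at this
      exact (hdiag 1).ne' this
    have h := hpd.dotProduct_mulVec_pos hv
    simp [dotProduct, Matrix.mulVec, Fin.sum_univ_three] at h
    rw [hsym 1 2] at h
    nlinarith [hdiag 1, h]
  have hdetM : 0 < M.det := hpd.det_pos
  rw [Matrix.det_fin_three, hsym 0 1, hsym 0 2, hsym 1 2] at hdetM
  obtain ⟨r0, hr0, hr0p⟩ : ∃ r : ℝ, r^2 = M 0 0 ∧ 0 < r :=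
    ⟨Real.sqrt (M 0 0), Real.sq_sqrt (hdiag 0).le, Real.sqrt_pos.mpr (hdiag 0)⟩
  obtain ⟨r1, hr1, hr1p⟩ : ∃ r : ℝ, r^2 = M 1 1 ∧ 0 < r :=
    ⟨Real.sqrt (M 1 1), Real.sq_sqrt (hdiag 1).le, Real.sqrt_pos.mpr (hdiag 1)⟩
  obtain ⟨r2, hr2, hr2p⟩ : ∃ r : ℝ, r^2 = M 2 2 ∧ 0 < r :=
    ⟨Real.sqrt (M 2 2), Real.sq_sqrt (hdiag 2).le, Real.sqrt_pos.mpr (hdiag 2)⟩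
  set x := M 0 1 with hx
  set y := M 0 2 with hy
  set z := M 1 2 with hz
  have hxnn : 0 ≤ x := hnn 0 1
  have hynn : 0 ≤ y := hnn 0 2
  have hznn : 0 ≤ z := hnn 1 2
  rw [← hr0, ← hr1] at key01
  rw [← hr0, ← hr2] at key02
  rw [← hr1, ← hr2] at key12
  set a := x / (r0*r1) with ha_def
  set b := y / (r0*r2) with hb_def
  set c := z / (r1*r2) with hc_def
  have hxlt : x < r0*r1 := by nlinarith [mul_pos hr0p hr1p]
  have hylt : y < r0*r2 := by nlinarith [mul_pos hr0p hr2p]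
  have hzlt : z < r1*r2 := by nlinarith [mul_pos hr1p hr2p]
  have ha : 0 ≤ a := div_nonneg hxnn (mul_pos hr0p hr1p).le
  have hb : 0 ≤ b := div_nonneg hynn (mul_pos hr0p hr2p).le
  have hc : 0 ≤ c := div_nonneg hznn (mul_pos hr1p hr2p).le
  have ha1 : a < 1 := (div_lt_one (mul_pos hr0p hr1p)).mpr hxlt
  have hb1 : b < 1 := (div_lt_one (mul_pos hr0p hr2p)).mpr hylt
  have hc1 : c < 1 := (div_lt_one (mul_pos hr1p hr2p)).mpr hzlt
  have hdet : 0 ≤ 1 + 2*a*b*c - a^2 - b^2 - c^2 := by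
    have hid : 1 + 2*a*b*c - a^2 - b^2 - c^2 =
        (r0^2 * (r1^2 * r2^2) - r0^2 * (z*z) - x*x*r2^2 + (x*(z*y) + y*(x*z)) - y*(r1^2*y))
          / (r0^2*r1^2*r2^2) := by
      rw [ha_def, hb_def, hc_def]
      field_simp
      ring
    rw [hid]
    have hnum : 0 < r0^2 * (r1^2 * r2^2) - r0^2 * (z*z) - x*x*r2^2 + (x*(z*y) + y*(x*z)) - y*(r1^2*y) := by
      rw [← hr0, ← hr1, ← hr2] at hdetM
      nlinarith [hdetM]
    positivity
  obtain ⟨L0, hL0nn, hL0⟩ := corr3 a b c ha hb hc ha1 hb1 hc1 hdet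
  refine ⟨L0 * Matrix.diagonal ![r0, r1, r2], ?_, ?_⟩
  · intro i j
    rw [Matrix.mul_diagonal]
    apply mul_nonneg (hL0nn _ _)
    fin_cases j <;> simp [hr0p.le, hr1p.le, hr2p.le]
  · rw [Matrix.transpose_mul, Matrix.diagonal_transpose, Matrix.mul_assoc,
      ← Matrix.mul_assoc L0ᵀ, hL0]
    ext i j
    rw [Matrix.mul_apply]
    fin_cases i <;> fin_cases j <;>
      simp [Matrix.mul_diagonal, Matrix.diagonal_mul, Fin.sum_univ_three,
        Matrix.cons_val_zero, Matrix.cons_val_one, Matrix.head_cons]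
    all_goals simp only [hsym 0 1, hsym 0 2, hsym 1 2, ← hx, ← hy, ← hz,
      ← hr0, ← hr1, ← hr2, ha_def, hb_def, hc_def]
    all_goals try field_simp
    all_goals try ring

theorem stmt_15 (n : ℕ) (A : Matrix (Fin n) (Fin n) ℝ)
    (hnn : ∀ i j, 0 ≤ A i j) (hpsd : A.PosSemidef) (hrank : A.rank = 3)
    (B : Matrix (Fin 3) (Fin n) ℝ) (hB : A = Bᵀ * B) (hnnq : B.IsNNQ) :
    A.IsCP ∧ A.cpRank = 3 := by
  obtain ⟨s, hdu, hC⟩ := hnnq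
  set B₁ := B.submatrix id s with hB₁
  set C := B₁⁻¹ * B with hCdef
  have hBC : B₁ * C = B := Matrix.mul_nonsing_inv_cancel_left B₁ B hdu
  set M := B₁ᵀ * B₁ with hM
  have hMA : ∀ i j, M i j = A (s i) (s j) := by
    intro i j
    rw [hM, hB]
    simp [hB₁, Matrix.mul_apply, Matrix.transpose_apply, Matrix.submatrix_apply]
  have hMnn : ∀ i j, 0 ≤ M i j := fun i j => (hMA i j) ▸ hnn (s i) (s j)
  have hMpd : M.PosDef := by
    rw [Matrix.posDef_iff_dotProduct_mulVec]
    constructor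
    · ext i j
      simp [hM, Matrix.mul_apply, Matrix.conjTranspose_apply, mul_comm]
    · intro x hx
      have hBx : B₁ *ᵥ x ≠ 0 := by
        intro hz
        exact hx (Matrix.mulVec_injective_iff_isUnit.mpr
          ((Matrix.isUnit_iff_isUnit_det B₁).mpr hdu) (by simpa using hz))
      have he : (star x) ⬝ᵥ M *ᵥ x = (B₁ *ᵥ x) ⬝ᵥ (B₁ *ᵥ x) := by
        rw [hM, ← Matrix.mulVec_mulVec, Matrix.dotProduct_mulVec,
          Matrix.vecMul_transpose]
        simp
      rw [he]
      have := Matrix.dotProduct_self_star_pos_iff (v := B₁ *ᵥ x)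
      simp only [star_trivial] at this
      exact this.mpr hBx
  obtain ⟨L, hLnn, hLM⟩ := factor3 M hMpd hMnn
  set D := L * C with hD
  have hDnn : ∀ i j, 0 ≤ D i j := by
    intro i j
    rw [hD, Matrix.mul_apply]
    exact Finset.sum_nonneg fun k _ => mul_nonneg (hLnn i k) (hC k j)
  have hADD : A = Dᵀ * D := by
    have e1 : A = Cᵀ * (B₁ᵀ * (B₁ * C)) := by
      rw [hB, ← hBC, Matrix.transpose_mul]
      simp only [Matrix.mul_assoc]
    have e2 : Dᵀ * D = Cᵀ * (Lᵀ * (L * C)) := by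
      rw [hD, Matrix.transpose_mul]
      simp only [Matrix.mul_assoc]
    have e3 : Lᵀ * (L * C) = B₁ᵀ * (B₁ * C) := by
      rw [← Matrix.mul_assoc, hLM, hM, Matrix.mul_assoc]
    rw [e2, e3]
    exact e1
  have hmem : 3 ∈ {m | ∃ Bm : Matrix (Fin m) (Fin n) ℝ, (∀ i j, 0 ≤ Bm i j) ∧ A = Bmᵀ * Bm} :=
    ⟨D, hDnn, hADD⟩
  have hlow : ∀ m ∈ {m | ∃ Bm : Matrix (Fin m) (Fin n) ℝ, (∀ i j, 0 ≤ Bm i j) ∧ A = Bmᵀ * Bm},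
      3 ≤ m := by
    rintro m ⟨Bm, hBmnn, hABm⟩
    have h1 : A.rank ≤ m := by
      calc A.rank = (Bmᵀ * Bm).rank := by rw [hABm]
        _ ≤ Bm.rank := Matrix.rank_mul_le_right _ _
        _ ≤ m := Matrix.rank_le_card_height Bm |>.trans (by simp)
    omega
  refine ⟨⟨3, D, hDnn, hADD⟩, ?_⟩
  exact le_antisymm (Nat.sInf_le hmem) (le_csInf ⟨3, hmem⟩ hlow)
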